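/- Let m ≥ 5 and let a satisfy V(m, r) ≤ a ≤ V(m, ⌊(m−1)/2⌋) for some r ≤ ⌊(m−1)/2⌋ − 1. Then the outer vertex boundary of the initial segment I_a^m of Hales order in the m-cube satisfies |Γ' I_a^m| ≥ C(m, r+1). -/

import Mathlib

/-- Hales (simplicial) order on the Boolean cube: smaller Hamming weight first;
for equal weights, `x` precedes `y` if the smallest coordinate where they differ is `1` in `x`. -/
def halesLT {m : ℕ} (x y : Fin m → ZMod 2) : Prop :=
  hammingNorm x < hammingNorm y ∨
    (hammingNorm x = hammingNorm y ∧
      ∃ i : Fin m, x i ≠ y i ∧ x i = 1 ∧ ∀ j : Fin m, j < i → x j = y j)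

/-- The set of the first `a` elements of the Boolean cube `{0,1}^m` in Hales order. -/
def halesInit (m a : ℕ) : Set (Fin m → ZMod 2) :=
  {x | Nat.card {y : Fin m → ZMod 2 | halesLT y x} < a}

/-- The outer vertex boundary of a set in the Boolean cube graph. -/
def outerBoundary {m : ℕ} (A : Set (Fin m → ZMod 2)) : Set (Fin m → ZMod 2) :=
  {v | v ∉ A ∧ ∃ u ∈ A, hammingDist u v = 1}

open Finset Function

open scoped Classical

namespace HalesAux

lemma zmod2_cases (a : ZMod 2) : a = 0 ∨ a = 1 := by revert a; decide

lemma zmod2_ne_zero {a : ZMod 2} (h : a ≠ 0) : a = 1 := by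
  rcases zmod2_cases a with h0 | h1
  · exact absurd h0 h
  · exact h1

lemma zmod2_ne_one {a : ZMod 2} (h : a ≠ 1) : a = 0 := by
  rcases zmod2_cases a with h0 | h1
  · exact h0
  · exact absurd h1 h

variable {m : ℕ}

/-- support of a vector -/
def toSet (x : Fin m → ZMod 2) : Finset (Fin m) := {i | x i = 1}

lemma mem_toSet {x : Fin m → ZMod 2} {i : Fin m} : i ∈ toSet x ↔ x i = 1 := by
  simp [toSet]

lemma hn_eq_card (x : Fin m → ZMod 2) : hammingNorm x = (toSet x).card := by
  refine congrArg Finset.card ?_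
  ext i
  simp only [hammingNorm, toSet, Finset.mem_filter, Finset.mem_univ, true_and]
  exact ⟨fun h => zmod2_ne_zero h, fun h => h ▸ one_ne_zero⟩

/-- inverse -/
def ofSet (A : Finset (Fin m)) : Fin m → ZMod 2 := fun i => if i ∈ A then 1 else 0

lemma toSet_ofSet (A : Finset (Fin m)) : toSet (ofSet A) = A := by
  ext i; by_cases h : i ∈ A <;> simp [mem_toSet, ofSet, h]

lemma ofSet_toSet (x : Fin m → ZMod 2) : ofSet (toSet x) = x := by
  funext i
  by_cases h : x i = 1
  · simp [ofSet, mem_toSet, h]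
  · have h0 : x i = 0 := zmod2_ne_one h
    simp [ofSet, mem_toSet, h, h0]

lemma card_level (w : ℕ) :
    ({x : Fin m → ZMod 2 | hammingNorm x = w} : Finset _).card = m.choose w := by
  have : ({x : Fin m → ZMod 2 | hammingNorm x = w} : Finset _).card
      = (Finset.powersetCard w (Finset.univ : Finset (Fin m))).card := by
    apply Finset.card_nbij' toSet ofSet
    · intro x hx
      simp only [Finset.mem_coe, Finset.mem_filter, Finset.mem_univ, true_and] at hx
      rw [Finset.mem_coe, Finset.mem_powersetCard]
      exact ⟨Finset.subset_univ _, by rw [← hn_eq_card]; exact hx⟩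
    · intro A hA
      rw [Finset.mem_coe, Finset.mem_powersetCard] at hA
      simp only [Finset.mem_coe, Finset.mem_filter, Finset.mem_univ, true_and]
      rw [hn_eq_card, toSet_ofSet]
      exact hA.2
    · intro x _; exact ofSet_toSet x
    · intro A _; exact toSet_ofSet A
  rw [this, Finset.card_powersetCard, Finset.card_univ, Fintype.card_fin]

lemma card_lt_level (w : ℕ) :
    ({x : Fin m → ZMod 2 | hammingNorm x < w} : Finset _).card
      = ∑ i ∈ Finset.range w, m.choose i := by
  induction w with
  | zero => simp
  | succ w ih =>
    rw [Finset.sum_range_succ, ← ih, ← card_level (m := m) w]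
    have hdisj : Disjoint ({x : Fin m → ZMod 2 | hammingNorm x < w} : Finset _)
        ({x | hammingNorm x = w} : Finset _) := by
      rw [Finset.disjoint_left]
      intro x hx hx'
      simp only [Finset.mem_filter, Finset.mem_univ, true_and] at hx hx'
      omega
    rw [← Finset.card_union_of_disjoint hdisj]
    congr 1
    ext x
    simp only [Finset.mem_filter, Finset.mem_univ, true_and, Finset.mem_union]
    omega

/-- flipping a 0 to 1 -/
lemma update_one_norm {x : Fin m → ZMod 2} {i : Fin m} (h : x i = 0) :
    hammingNorm (Function.update x i 1) = hammingNorm x + 1 := by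
  rw [hn_eq_card, hn_eq_card]
  have hts : toSet (Function.update x i 1) = insert i (toSet x) := by
    ext j
    rcases eq_or_ne j i with rfl | hj
    · simp [mem_toSet]
    · simp [mem_toSet, Function.update_of_ne hj, hj]
  rw [hts, Finset.card_insert_of_notMem (by simp [mem_toSet, h])]

lemma update_one_dist (x : Fin m → ZMod 2) (i : Fin m) (h : x i = 0) :
    hammingDist x (Function.update x i 1) = 1 := by
  refine Eq.trans (congrArg Finset.card ?_) (Finset.card_singleton i)
  ext j
  rcases eq_or_ne j i with rfl | hj
  · simp [hammingDist, h]
  · simp [hammingDist, Function.update_of_ne hj, hj]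

lemma update_zero_norm {x : Fin m → ZMod 2} {i : Fin m} (h : x i = 1) :
    hammingNorm (Function.update x i 0) + 1 = hammingNorm x := by
  rw [hn_eq_card, hn_eq_card]
  have hts : toSet (Function.update x i 0) = (toSet x).erase i := by
    ext j
    rcases eq_or_ne j i with rfl | hj
    · simp [mem_toSet]
    · simp [mem_toSet, Function.update_of_ne hj, hj]
  rw [hts, Finset.card_erase_add_one (by simp [mem_toSet, h])]

lemma update_zero_dist (x : Fin m → ZMod 2) (i : Fin m) (h : x i = 1) :
    hammingDist (Function.update x i 0) x = 1 := by
  refine Eq.trans (congrArg Finset.card ?_) (Finset.card_singleton i)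
  ext j
  rcases eq_or_ne j i with rfl | hj
  · simp [hammingDist, h]
  · simp [hammingDist, Function.update_of_ne hj, hj]

lemma dist_one {u v : Fin m → ZMod 2} (h : hammingDist u v = 1) :
    ∃ i, u i ≠ v i ∧ ∀ j, j ≠ i → u j = v j := by
  unfold hammingDist at h
  obtain ⟨i, hi⟩ := Finset.card_eq_one.mp h
  refine ⟨i, ?_, ?_⟩
  · have : i ∈ ({i | u i ≠ v i} : Finset (Fin m)) := hi ▸ Finset.mem_singleton_self i
    simpa using this
  · intro j hj
    by_contra hne
    have : j ∈ ({i | u i ≠ v i} : Finset (Fin m)) := by simpa using hne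
    rw [hi, Finset.mem_singleton] at this
    exact hj this

lemma natCard_eq (P : (Fin m → ZMod 2) → Prop) :
    Nat.card {y : Fin m → ZMod 2 | P y} = ({y | P y} : Finset _).card := by
  rw [Nat.card_coe_set_eq, Set.ncard_eq_toFinset_card']
  congr 1
  ext y
  simp

lemma mem_init_of {a : ℕ} {x : Fin m → ZMod 2}
    (h : ∑ i ∈ Finset.range (hammingNorm x + 1), m.choose i ≤ a) : x ∈ halesInit m a := by
  show Nat.card {y : Fin m → ZMod 2 | halesLT y x} < a
  rw [natCard_eq]
  have hsub : ({y | halesLT y x} : Finset (Fin m → ZMod 2))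
      ⊂ ({y | hammingNorm y < hammingNorm x + 1} : Finset (Fin m → ZMod 2)) := by
    rw [Finset.ssubset_iff_of_subset]
    · refine ⟨x, ?_, ?_⟩
      · simp only [Finset.mem_filter, Finset.mem_univ, true_and]; omega
      · simp only [Finset.mem_filter, Finset.mem_univ, true_and]
        rintro (hlt | ⟨-, i, hne, -, -⟩)
        · omega
        · exact hne rfl
    · intro y hy
      simp only [Finset.mem_filter, Finset.mem_univ, true_and] at hy ⊢
      rcases hy with hlt | ⟨heq, -⟩ <;> omega
  calc ({y | halesLT y x} : Finset (Fin m → ZMod 2)).card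
      < ({y | hammingNorm y < hammingNorm x + 1} : Finset (Fin m → ZMod 2)).card :=
        Finset.card_lt_card hsub
    _ = ∑ i ∈ Finset.range (hammingNorm x + 1), m.choose i := card_lt_level _
    _ ≤ a := h

lemma not_mem_init_of {a : ℕ} {x : Fin m → ZMod 2}
    (h : a ≤ ∑ i ∈ Finset.range (hammingNorm x), m.choose i) : x ∉ halesInit m a := by
  intro hx
  have hx' : Nat.card {y : Fin m → ZMod 2 | halesLT y x} < a := hx
  rw [natCard_eq] at hx'
  have hsub : ({y | hammingNorm y < hammingNorm x} : Finset (Fin m → ZMod 2))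
      ⊆ ({y | halesLT y x} : Finset (Fin m → ZMod 2)) := by
    intro y hy
    simp only [Finset.mem_filter, Finset.mem_univ, true_and] at hy ⊢
    exact Or.inl hy
  have := Finset.card_le_card hsub
  rw [card_lt_level] at this
  omega

lemma choose_mono {i j : ℕ} (hij : i ≤ j) (hj : 2 * j ≤ m) : m.choose i ≤ m.choose j := by
  induction j, hij using Nat.le_induction with
  | base => exact le_rfl
  | succ j hij ih =>
    refine (ih (by omega)).trans (Nat.choose_le_succ_of_lt_half_left (by omega))

end HalesAux

theorem stmt_14 (m a r : ℕ) (hm : 5 ≤ m) (hr : r ≤ (m - 1) / 2 - 1)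
    (ha₁ : ∑ i ∈ Finset.range (r + 1), m.choose i ≤ a)
    (ha₂ : a ≤ ∑ i ∈ Finset.range ((m - 1) / 2 + 1), m.choose i) :
    m.choose (r + 1) ≤ Nat.card (outerBoundary (halesInit m a)) := by
  classical
  have hex : ∃ t, a ≤ ∑ i ∈ Finset.range (t + 1), m.choose i := ⟨(m - 1) / 2, ha₂⟩
  set t := Nat.find hex with htdef
  have ht : a ≤ ∑ i ∈ Finset.range (t + 1), m.choose i := Nat.find_spec hex
  have htk : t ≤ (m - 1) / 2 := Nat.find_min' hex ha₂
  have htmin : ∀ s, s < t → ∑ i ∈ Finset.range (s + 1), m.choose i < a := by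
    intro s hs
    have := Nat.find_min hex hs
    omega
  have hrt : r ≤ t := by
    by_contra hlt
    push_neg at hlt
    have h1 : ∑ i ∈ Finset.range (t + 2), m.choose i ≤ ∑ i ∈ Finset.range (r + 1), m.choose i :=
      Finset.sum_le_sum_of_subset (Finset.range_subset_range.mpr (by omega))
    rw [Finset.sum_range_succ] at h1
    have hpos : 0 < m.choose (t + 1) := Nat.choose_pos (by omega)
    omega
  set BF : Finset (Fin m → ZMod 2) := {v | v ∈ outerBoundary (halesInit m a)} with hBF
  have hcard : Nat.card (outerBoundary (halesInit m a)) = BF.card := by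
    have := HalesAux.natCard_eq (fun v : Fin m → ZMod 2 => v ∈ outerBoundary (halesInit m a))
    exact this
  rw [hcard]
  have hmemBF : ∀ v : Fin m → ZMod 2, v ∉ halesInit m a →
      (∃ u ∈ halesInit m a, hammingDist u v = 1) → v ∈ BF := by
    intro v h1 h2
    simp only [hBF, Finset.mem_filter, Finset.mem_univ, true_and]
    exact ⟨h1, h2⟩
  have hnotI : ∀ x : Fin m → ZMod 2, t < hammingNorm x → x ∉ halesInit m a := by
    intro x hx
    apply HalesAux.not_mem_init_of
    exact ht.trans (Finset.sum_le_sum_of_subset (Finset.range_subset_range.mpr (by omega)))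
  -- a vector of positive weight has a lower neighbour of one smaller weight
  have hlower : ∀ v : Fin m → ZMod 2, 0 < hammingNorm v →
      ∃ u : Fin m → ZMod 2, hammingNorm u + 1 = hammingNorm v ∧ hammingDist u v = 1 := by
    intro v hv
    rw [HalesAux.hn_eq_card] at hv
    obtain ⟨i, hi⟩ := Finset.card_pos.mp hv
    rw [HalesAux.mem_toSet] at hi
    exact ⟨Function.update v i 0, HalesAux.update_zero_norm hi,
      HalesAux.update_zero_dist v i hi⟩
  rcases eq_or_lt_of_le hrt with hteq | htgt
  · -- t = r : all of level r+1 is in the boundary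
    have hsub : ({v : Fin m → ZMod 2 | hammingNorm v = r + 1} : Finset _) ⊆ BF := by
      intro v hv
      simp only [Finset.mem_filter, Finset.mem_univ, true_and] at hv
      obtain ⟨u, hu1, hu2⟩ := hlower v (by omega)
      refine hmemBF v (hnotI v (by omega)) ⟨u, ?_, hu2⟩
      apply HalesAux.mem_init_of
      have he : hammingNorm u + 1 = r + 1 := by omega
      rw [he]
      exact ha₁
    calc m.choose (r + 1)
        = ({v : Fin m → ZMod 2 | hammingNorm v = r + 1} : Finset _).card :=
          (HalesAux.card_level _).symm
      _ ≤ BF.card := Finset.card_le_card hsub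
  · -- r + 1 ≤ t
    have h2t : 2 * t + 1 ≤ m := by omega
    set S : Finset (Fin m → ZMod 2) :=
      {x | hammingNorm x = t ∧ x ∈ halesInit m a} with hS
    set B1 : Finset (Fin m → ZMod 2) :=
      {x | hammingNorm x = t ∧ x ∉ halesInit m a} with hB1
    set B2 : Finset (Fin m → ZMod 2) :=
      {v | hammingNorm v = t + 1 ∧ ∃ u, hammingNorm u = t ∧ u ∈ halesInit m a ∧
        hammingDist u v = 1} with hB2
    have hsplit : S.card + B1.card = m.choose t := by
      rw [← HalesAux.card_level (m := m) t]
      have hdisj : Disjoint S B1 := by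
        rw [Finset.disjoint_left]
        intro x hx hx'
        simp only [hS, hB1, Finset.mem_filter] at hx hx'
        exact hx'.2.2 hx.2.2
      rw [← Finset.card_union_of_disjoint hdisj]
      congr 1
      ext x
      simp only [hS, hB1, Finset.mem_filter, Finset.mem_univ, true_and, Finset.mem_union]
      tauto
    -- double counting : S.card ≤ B2.card
    have key : S.card * (m - t) ≤ B2.card * (t + 1) := by
      apply Finset.card_mul_le_card_mul (fun u v => hammingDist u v = 1)
      · intro u hu
        simp only [hS, Finset.mem_filter, Finset.mem_univ, true_and] at hu
        obtain ⟨hut, huI⟩ := hu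
        have hinj : ((HalesAux.toSet u)ᶜ : Finset (Fin m)).card
            ≤ (B2.bipartiteAbove (fun u v => hammingDist u v = 1) u).card := by
          apply Finset.card_le_card_of_injOn (fun i => Function.update u i 1)
          · intro i hi
            have hui : u i = 0 := by
              rw [Finset.mem_coe, Finset.mem_compl, HalesAux.mem_toSet] at hi
              exact HalesAux.zmod2_ne_one hi
            simp only [Finset.mem_coe, Finset.bipartiteAbove, Finset.mem_filter, hB2, Finset.mem_univ, true_and]
            exact ⟨⟨by rw [HalesAux.update_one_norm hui, hut],
              u, hut, huI, HalesAux.update_one_dist u i hui⟩,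
              HalesAux.update_one_dist u i hui⟩
          · intro i hi j hj hij
            by_contra hne
            have h1 : Function.update u i 1 i = 1 := by simp
            have h2 : Function.update u j 1 i = u i := Function.update_of_ne (by exact fun h => hne h) 1 u
            have hij' : Function.update u i 1 = Function.update u j 1 := hij
            rw [hij', h2] at h1
            rw [Finset.coe_compl, Set.mem_compl_iff, Finset.mem_coe, HalesAux.mem_toSet] at hi
            exact hi h1
        calc m - t = ((HalesAux.toSet u)ᶜ : Finset (Fin m)).card := by
              rw [Finset.card_compl, Fintype.card_fin, ← HalesAux.hn_eq_card, hut]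
          _ ≤ _ := hinj
      · intro v hv
        simp only [hB2, Finset.mem_filter, Finset.mem_univ, true_and] at hv
        obtain ⟨hvt, -⟩ := hv
        have hinj : (S.bipartiteBelow (fun u v => hammingDist u v = 1) v).card
            ≤ (HalesAux.toSet v).card := by
          apply Finset.card_le_card_of_injOn
            (fun u => if h : ∃ i, u i ≠ v i ∧ ∀ j, j ≠ i → u j = v j then h.choose
              else ⟨0, by omega⟩)
          · intro u hu
            simp only [Finset.mem_coe, Finset.bipartiteBelow, Finset.mem_filter, hS, Finset.mem_univ,
              true_and] at hu
            obtain ⟨⟨hut, -⟩, hd⟩ := hu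
            have hex' : ∃ i, u i ≠ v i ∧ ∀ j, j ≠ i → u j = v j := HalesAux.dist_one hd
            simp only [dif_pos hex', Finset.mem_coe]
            obtain ⟨hne, hagree⟩ := hex'.choose_spec
            set i := hex'.choose
            rw [HalesAux.mem_toSet]
            by_contra hvi
            have hvi0 : v i = 0 := HalesAux.zmod2_ne_one hvi
            have hui1 : u i = 1 := HalesAux.zmod2_ne_zero (fun h => hne (h.trans hvi0.symm))
            have huv : u = Function.update v i 1 := by
              funext j
              rcases eq_or_ne j i with rfl | hj
              · simp [hui1]
              · rw [Function.update_of_ne hj]; exact hagree j hj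
            have := HalesAux.update_one_norm hvi0
            rw [← huv] at this
            omega
          · intro u hu u' hu' huu'
            simp only [Finset.coe_filter, Finset.bipartiteBelow, Finset.mem_filter, hS,
              Finset.mem_univ, true_and, Set.mem_setOf_eq] at hu hu'
            obtain ⟨⟨hut, -⟩, hd⟩ := hu
            obtain ⟨⟨hut', -⟩, hd'⟩ := hu'
            have hex1 : ∃ i, u i ≠ v i ∧ ∀ j, j ≠ i → u j = v j := HalesAux.dist_one hd
            have hex2 : ∃ i, u' i ≠ v i ∧ ∀ j, j ≠ i → u' j = v j := HalesAux.dist_one hd'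
            simp only [dif_pos hex1, dif_pos hex2] at huu'
            obtain ⟨hne1, hag1⟩ := hex1.choose_spec
            obtain ⟨hne2, hag2⟩ := hex2.choose_spec
            funext j
            rcases eq_or_ne j hex1.choose with hji | hj
            · have hne1' : u j ≠ v j := by rw [hji]; exact hne1
              have h2 : u' j ≠ v j := by rw [hji, huu']; exact hne2
              rcases HalesAux.zmod2_cases (v j) with h0 | h1
              · rw [HalesAux.zmod2_ne_zero (fun h => hne1' (h.trans h0.symm)),
                  HalesAux.zmod2_ne_zero (fun h => h2 (h.trans h0.symm))]
              · rw [HalesAux.zmod2_ne_one (fun h => hne1' (h.trans h1.symm)),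
                  HalesAux.zmod2_ne_one (fun h => h2 (h.trans h1.symm))]
            · rw [hag1 j hj, hag2 j (fun h => hj (by rw [huu']; exact h))]
        calc (S.bipartiteBelow (fun u v => hammingDist u v = 1) v).card
            ≤ (HalesAux.toSet v).card := hinj
          _ = t + 1 := by rw [← HalesAux.hn_eq_card, hvt]
    have hScard : S.card ≤ B2.card := by
      have h1 : S.card * (t + 1) ≤ S.card * (m - t) :=
        Nat.mul_le_mul_left _ (by omega)
      have := h1.trans key
      exact Nat.le_of_mul_le_mul_right this (by omega)
    -- B1 and B2 are inside the boundary
    have hB1sub : B1 ⊆ BF := by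
      intro x hx
      simp only [hB1, Finset.mem_filter, Finset.mem_univ, true_and] at hx
      obtain ⟨hxt, hxI⟩ := hx
      obtain ⟨u, hu1, hu2⟩ := hlower x (by omega)
      refine hmemBF x hxI ⟨u, ?_, hu2⟩
      apply HalesAux.mem_init_of
      exact le_of_lt (htmin (hammingNorm u) (by omega))
    have hB2sub : B2 ⊆ BF := by
      intro v hv
      simp only [hB2, Finset.mem_filter, Finset.mem_univ, true_and] at hv
      obtain ⟨hvt, u, hut, huI, hd⟩ := hv
      exact hmemBF v (hnotI v (by omega)) ⟨u, huI, hd⟩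
    have hdisj12 : Disjoint B1 B2 := by
      rw [Finset.disjoint_left]
      intro x hx hx'
      simp only [hB1, hB2, Finset.mem_filter, Finset.mem_univ, true_and] at hx hx'
      omega
    calc m.choose (r + 1)
        ≤ m.choose t := HalesAux.choose_mono (by omega) (by omega)
      _ = S.card + B1.card := hsplit.symm
      _ ≤ B2.card + B1.card := by omega
      _ = (B1 ∪ B2).card := by rw [Finset.card_union_of_disjoint hdisj12]; omega
      _ ≤ BF.card := Finset.card_le_card (Finset.union_subset hB1sub hB2sub)
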